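/- Let G, S, O, Π be random variables on a finite probability space. Suppose (1) P(Π = π | S = s, G = g, O = o) = P(Π = π | S = s, O = o) for all values with positive probability (task-symbolic sufficiency), and (2) S and O are conditionally independent given G. Then for all g, o with P(G = g, O = o) > 0, P(Π = π | G = g, O = o) = Σ_s P(Π = π | S = s, O = o) · P(S = s | G = g), where the sum ranges over s with P(S = s | G = g, O = o) > 0. -/

import Mathlib

open Classical Finset

/-- Probability of an event on a finite space with weight function `p`. -/
noncomputable def Pr {Ω : Type*} [Fintype Ω] (p : Ω → ℝ) (A : Ω → Prop) : ℝ :=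
  ∑ ω, if A ω then p ω else 0

/-- Conditional probability `P(A | B)`. -/
noncomputable def cPr {Ω : Type*} [Fintype Ω] (p : Ω → ℝ) (A B : Ω → Prop) : ℝ :=
  Pr p (fun ω => A ω ∧ B ω) / Pr p B

lemma Pr_nonneg {Ω : Type*} [Fintype Ω] (p : Ω → ℝ) (hp : ∀ ω, 0 ≤ p ω)
    (A : Ω → Prop) : 0 ≤ Pr p A :=
  Finset.sum_nonneg fun ω _ => by by_cases h : A ω <;> simp [h, hp ω]

lemma Pr_mono {Ω : Type*} [Fintype Ω] (p : Ω → ℝ) (hp : ∀ ω, 0 ≤ p ω)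
    {A B : Ω → Prop} (h : ∀ ω, A ω → B ω) : Pr p A ≤ Pr p B :=
  Finset.sum_le_sum fun ω _ => by
    by_cases hA : A ω
    · simp [hA, h ω hA]
    · by_cases hB : B ω <;> simp [hA, hB, hp ω]

lemma Pr_congr {Ω : Type*} [Fintype Ω] (p : Ω → ℝ)
    {A B : Ω → Prop} (h : ∀ ω, A ω ↔ B ω) : Pr p A = Pr p B :=
  Finset.sum_congr rfl fun ω _ => by rw [h ω]

lemma Pr_decomp {Ω σ : Type*} [Fintype Ω] [Fintype σ] (p : Ω → ℝ)
    (S : Ω → σ) (A : Ω → Prop) :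
    Pr p A = ∑ s, Pr p (fun ω => S ω = s ∧ A ω) := by
  unfold Pr
  rw [Finset.sum_comm]
  refine Finset.sum_congr rfl fun ω _ => ?_
  by_cases hA : A ω <;> simp [hA]

/-- CAPER Proposition (factorization of success probability):
under task-symbolic sufficiency and conditional independence of S and O given G,
`P(Π = π | G = g, O = o) = Σ_s P(Π = π | S = s, O = o) · P(S = s | G = g)`,
the sum ranging over s with `P(S = s | G = g, O = o) > 0`. -/
theorem stmt0 {Ω γ σ θ ρ : Type*} [Fintype Ω] [Fintype σ]
    (p : Ω → ℝ) (hp : ∀ ω, 0 ≤ p ω) (hsum : ∑ ω, p ω = 1)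
    (G : Ω → γ) (S : Ω → σ) (O : Ω → θ) (Pol : Ω → ρ)
    (h1 : ∀ (s : σ) (g : γ) (o : θ) (π : ρ),
      0 < Pr p (fun ω => S ω = s ∧ G ω = g ∧ O ω = o) →
      cPr p (fun ω => Pol ω = π) (fun ω => S ω = s ∧ G ω = g ∧ O ω = o)
        = cPr p (fun ω => Pol ω = π) (fun ω => S ω = s ∧ O ω = o))
    (h2 : ∀ (s : σ) (g : γ) (o : θ), 0 < Pr p (fun ω => G ω = g) →
      cPr p (fun ω => S ω = s ∧ O ω = o) (fun ω => G ω = g)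
        = cPr p (fun ω => S ω = s) (fun ω => G ω = g)
          * cPr p (fun ω => O ω = o) (fun ω => G ω = g))
    (g : γ) (o : θ) (π : ρ)
    (hpos : 0 < Pr p (fun ω => G ω = g ∧ O ω = o)) :
    cPr p (fun ω => Pol ω = π) (fun ω => G ω = g ∧ O ω = o)
      = ∑ s ∈ Finset.univ.filter
            (fun s : σ =>
              0 < cPr p (fun ω => S ω = s) (fun ω => G ω = g ∧ O ω = o)),
          cPr p (fun ω => Pol ω = π) (fun ω => S ω = s ∧ O ω = o)
            * cPr p (fun ω => S ω = s) (fun ω => G ω = g) := by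
  have hPG : 0 < Pr p (fun ω => G ω = g) :=
    lt_of_lt_of_le hpos (Pr_mono p hp fun ω h => h.1)
  have hOG : Pr p (fun ω => O ω = o ∧ G ω = g) = Pr p (fun ω => G ω = g ∧ O ω = o) :=
    Pr_congr p fun ω => and_comm
  -- P(S=s | G,O) = P(S=s | G), from conditional independence
  have hkey : ∀ s : σ,
      Pr p (fun ω => S ω = s ∧ G ω = g ∧ O ω = o) / Pr p (fun ω => G ω = g ∧ O ω = o)
        = Pr p (fun ω => S ω = s ∧ G ω = g) / Pr p (fun ω => G ω = g) := by
    intro s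
    have h := h2 s g o hPG
    unfold cPr at h
    have e1 : Pr p (fun ω => (S ω = s ∧ O ω = o) ∧ G ω = g)
        = Pr p (fun ω => S ω = s ∧ G ω = g ∧ O ω = o) :=
      Pr_congr p fun ω => by tauto
    rw [e1] at h
    have hmul : Pr p (fun ω => S ω = s ∧ G ω = g ∧ O ω = o) * Pr p (fun ω => G ω = g)
        = Pr p (fun ω => S ω = s ∧ G ω = g) * Pr p (fun ω => O ω = o ∧ G ω = g) := by
      field_simp at h
      exact h
    rw [hOG] at hmul
    rw [div_eq_div_iff hpos.ne' hPG.ne']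
    linarith [hmul]
  -- decompose the left-hand side over values of S
  have hdec : Pr p (fun ω => Pol ω = π ∧ G ω = g ∧ O ω = o)
      = ∑ s, Pr p (fun ω => S ω = s ∧ Pol ω = π ∧ G ω = g ∧ O ω = o) :=
    Pr_decomp p S _
  unfold cPr
  rw [hdec, Finset.sum_div, Finset.sum_filter]
  refine Finset.sum_congr rfl fun s _ => ?_
  have hnum_eq : Pr p (fun ω => S ω = s ∧ Pol ω = π ∧ G ω = g ∧ O ω = o)
      = Pr p (fun ω => Pol ω = π ∧ S ω = s ∧ G ω = g ∧ O ω = o) :=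
    Pr_congr p fun ω => by tauto
  split_ifs with hc
  · -- positive case
    have hs : 0 < Pr p (fun ω => S ω = s ∧ G ω = g ∧ O ω = o) := by
      have h2' := mul_pos hc hpos
      rwa [div_mul_cancel₀ _ hpos.ne'] at h2'
    have h1' := h1 s g o π hs
    unfold cPr at h1'
    have hnum : Pr p (fun ω => Pol ω = π ∧ S ω = s ∧ G ω = g ∧ O ω = o)
        = (Pr p (fun ω => Pol ω = π ∧ S ω = s ∧ O ω = o)
            / Pr p (fun ω => S ω = s ∧ O ω = o))
          * Pr p (fun ω => S ω = s ∧ G ω = g ∧ O ω = o) := by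
      rw [← h1', div_mul_cancel₀ _ hs.ne']
    rw [hnum_eq, hnum, mul_div_assoc, hkey s]
  · -- zero case
    have hz0 : Pr p (fun ω => S ω = s ∧ G ω = g ∧ O ω = o) = 0 := by
      rcases (Pr_nonneg p hp (fun ω => S ω = s ∧ G ω = g ∧ O ω = o)).lt_or_eq with h | h
      · exact absurd (div_pos h hpos) hc
      · exact h.symm
    have hz : Pr p (fun ω => S ω = s ∧ Pol ω = π ∧ G ω = g ∧ O ω = o) = 0 := by
      refine le_antisymm ?_ (Pr_nonneg p hp _)
      calc Pr p (fun ω => S ω = s ∧ Pol ω = π ∧ G ω = g ∧ O ω = o)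
          ≤ Pr p (fun ω => S ω = s ∧ G ω = g ∧ O ω = o) :=
            Pr_mono p hp fun ω h => ⟨h.1, h.2.2⟩
        _ = 0 := hz0
    rw [hz, zero_div]
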